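/- For every graph G and every integer d ≥ 2, the picture space X^d(G) is path-connected. -/

import Mathlib

open scoped Classical LinearAlgebra.Projectivization
open CategoryTheory

noncomputable section




/-- A finite multigraph: a nonempty finite vertex type, a finite edge type,
and an assignment of an unordered pair of endpoints to each edge. -/
structure Multigraph where
  V : Type
  E : Type
  [fintypeV : Fintype V]
  [fintypeE : Fintype E]
  [nonemptyV : Nonempty V]
  ends : E → Sym2 V

attribute [instance] Multigraph.fintypeV Multigraph.fintypeE Multigraph.nonemptyV

namespace Multigraph

/-- An edge is a loop if its two endpoints coincide. -/
def IsLoop (G : Multigraph) (e : G.E) : Prop := (G.ends e).IsDiag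

/-- Adjacency relation using only the edges in the set `F`. -/
def adjOn (G : Multigraph) (F : Set G.E) (u u' : G.V) : Prop :=
  ∃ e ∈ F, G.ends e = s(u, u')

/-- The number of connected components of the spanning subgraph `(V, F)`. -/
def ccCount (G : Multigraph) (F : Set G.E) : ℕ :=
  Nat.card (Quotient (Relation.EqvGen.setoid (G.adjOn F)))

/-- The number of connected components of `G`. -/
def c (G : Multigraph) : ℕ := G.ccCount Set.univ

/-- The rank of an edge set `F`: `|V| - c(F)`. -/
def rk (G : Multigraph) (F : Set G.E) : ℕ := Fintype.card G.V - G.ccCount F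

/-- An edge is an isthmus if deleting it increases the number of components. -/
def IsIsthmus (G : Multigraph) (e : G.E) : Prop :=
  G.ccCount {e' | e' ≠ e} = G.c + 1

/-- The Tutte polynomial of `G`, evaluated at `(x, y)` in a commutative ring,
via the corank-nullity generating function. -/
def tutte (G : Multigraph) {R : Type*} [CommRing R] (x y : R) : R :=
  ∑ F : Finset G.E,
    (x - 1) ^ (G.rk Set.univ - G.rk (F : Set G.E)) * (y - 1) ^ (F.card - G.rk (F : Set G.E))

/-- Deletion of an edge. -/
def deleteEdge (G : Multigraph) (e : G.E) : Multigraph where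
  V := G.V
  E := {e' : G.E // e' ≠ e}
  ends := fun e' => G.ends e'.1

/-- Contraction of a nonloop edge `e` with endpoints `v ≠ w`: the vertex `w` is
identified with `v` (the merged vertex), and `e` is removed. -/
def contractEdge (G : Multigraph) (e : G.E) {v w : G.V} (hvw : v ≠ w) : Multigraph where
  V := {u : G.V // u ≠ w}
  E := {e' : G.E // e' ≠ e}
  nonemptyV := ⟨⟨v, hvw⟩⟩
  ends := fun e' => (G.ends e'.1).map
    (fun u => if h : u = w then ⟨v, hvw⟩ else ⟨u, h⟩)

/-- The quotient-by-contraction map on vertices: `w ↦ v` and every other vertex to itself. -/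
def contractMap (G : Multigraph) {v w : G.V} (hvw : v ≠ w) : G.V → {u : G.V // u ≠ w} :=
  fun u => if h : u = w then ⟨v, hvw⟩ else ⟨u, h⟩

/-- The merged vertex of a contraction. -/
def mergedVertex (G : Multigraph) {v w : G.V} (hvw : v ≠ w) : {u : G.V // u ≠ w} :=
  ⟨v, hvw⟩

end Multigraph





/-- The topology on a projectivization: the quotient topology from nonzero vectors. -/
instance projSpaceTopology (K V : Type*) [DivisionRing K] [AddCommGroup V] [Module K V]
    [TopologicalSpace V] : TopologicalSpace (ℙ K V) :=
  instTopologicalSpaceQuotient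

/-- Complex projective `d`-space, with its classical (Euclidean) topology. -/
abbrev CP (d : ℕ) := ℙ ℂ (Fin (d + 1) → ℂ)

/-- The Grassmannian of projective lines in `ℂP^d`: 2-dimensional linear subspaces
of `ℂ^{d+1}`. -/
def ProjLine (d : ℕ) := {W : Submodule ℂ (Fin (d + 1) → ℂ) // Module.finrank ℂ W = 2}

/-- The topology on the Grassmannian of lines: the quotient topology from the space of
linearly independent pairs of vectors, via the span map. -/
instance (d : ℕ) : TopologicalSpace (ProjLine d) :=
  TopologicalSpace.coinduced
    (fun p : {f : Fin 2 → (Fin (d + 1) → ℂ) // LinearIndependent ℂ f} =>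
      (⟨Submodule.span ℂ (Set.range p.1), by
        simpa using finrank_span_eq_card p.2⟩ : ProjLine d))
    inferInstance

/-- A point of `ℂP^d` lies on a projective line. -/
def memLine {d : ℕ} (x : CP d) (L : ProjLine d) : Prop :=
  x.submodule ≤ L.1


/-- A picture of the graph `G` in `ℂP^d`: a point for each vertex, a (projective) line for
each edge, such that the point at each endpoint of an edge lies on the line of that edge. -/
structure Picture (G : Multigraph) (d : ℕ) where
  pt : G.V → CP d
  line : G.E → ProjLine d
  mem : ∀ e : G.E, ∀ v ∈ G.ends e, memLine (pt v) (line e)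

/-- The picture space `X^d(G)`, topologized as a subspace of
`(ℂP^d)^V × Gr(2, ℂ^{d+1})^E`. -/
instance (G : Multigraph) (d : ℕ) : TopologicalSpace (Picture G d) :=
  TopologicalSpace.induced
    (fun P : Picture G d => ((P.pt, P.line) : (G.V → CP d) × (G.E → ProjLine d)))
    inferInstance

namespace Picture

variable {G : Multigraph} {d : ℕ}

/-- The forgetful map `X^d(G) → X^d(G−e)` dropping the line at `e`. -/
def del (e : G.E) (P : Picture G d) : Picture (G.deleteEdge e) d where
  pt := P.pt
  line := fun e' => P.line e'.1
  mem := fun e' v hv => P.mem e'.1 v hv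

/-- The natural injection `X^d(G/e) → X^d(G−e)` associated to the contraction of a
nonloop edge `e` with endpoints `v ≠ w`: both `v` and `w` are assigned the point at
the merged vertex. -/
def ofContract (e : G.E) {v w : G.V} (hvw : v ≠ w)
    (Q : Picture (G.contractEdge e hvw) d) : Picture (G.deleteEdge e) d where
  pt := fun u => Q.pt (G.contractMap hvw u)
  line := fun e' => Q.line e'
  mem := fun e' u hu =>
    Q.mem e' (G.contractMap hvw u) (Sym2.mem_map.2 ⟨u, hu, rfl⟩)

/-- The coincidence locus `Z_e(G)` (for `e` with endpoints `v, w`): pictures with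
`P(v) = P(w)`, as a subspace of the picture space. -/
def coincLocus (G : Multigraph) (d : ℕ) (v w : G.V) : Type :=
  {P : Picture G d // P.pt v = P.pt w}

instance (G : Multigraph) (d : ℕ) (v w : G.V) : TopologicalSpace (coincLocus G d v w) :=
  instTopologicalSpaceSubtype

/-- The contraction map `π : Z_e(G) → X^d(G/e)`: forget the line at `e` and remember the
common point of `v` and `w` at the merged vertex. -/
def contractOfCoinc (e : G.E) {v w : G.V} (hvw : v ≠ w)
    (P : coincLocus G d v w) : Picture (G.contractEdge e hvw) d where
  pt := fun u => P.1.pt u.1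
  line := fun e' => P.1.line e'.1
  mem := by
    intro e' u hu
    rcases Sym2.mem_map.1 hu with ⟨b, hb, hbu⟩
    have : P.1.pt u.1 = P.1.pt b := by
      by_cases h : b = w
      · subst h
        have : u = G.mergedVertex hvw := by
          simpa [Multigraph.contractMap, Multigraph.mergedVertex] using hbu.symm
        rw [this]
        exact P.2
      · have : u = ⟨b, h⟩ := by simpa [Multigraph.contractMap, h] using hbu.symm
        rw [this]
    show memLine (P.1.pt u.1) (P.1.line e'.1)
    rw [this]
    exact P.1.mem e'.1 b hb

end Picture


namespace Picture

variable {G : Multigraph} {d : ℕ}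

lemma continuous_data :
    Continuous (fun P : Picture G d =>
      ((P.pt, P.line) : (G.V → CP d) × (G.E → ProjLine d))) :=
  continuous_induced_dom

lemma continuous_pt : Continuous (fun P : Picture G d => P.pt) :=
  continuous_data.fst

lemma continuous_line : Continuous (fun P : Picture G d => P.line) :=
  continuous_data.snd

lemma continuous_mk {X : Type*} [TopologicalSpace X] (f : X → Picture G d)
    (h1 : Continuous fun x => (f x).pt) (h2 : Continuous fun x => (f x).line) :
    Continuous f :=
  continuous_induced_rng.2 (h1.prodMk h2)

/-- The forgetful map `X^d(G) → X^d(G−e)`, as a continuous map. -/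
def delCM (e : G.E) : C(Picture G d, Picture (G.deleteEdge e) d) where
  toFun := del e
  continuous_toFun := by
    apply continuous_mk
    · exact continuous_pt
    · exact continuous_pi fun e' => (continuous_apply e'.1).comp continuous_line

/-- The embedding `X^d(G/e) → X^d(G−e)`, as a continuous map. -/
def ofContractCM (e : G.E) {v w : G.V} (hvw : v ≠ w) :
    C(Picture (G.contractEdge e hvw) d, Picture (G.deleteEdge e) d) where
  toFun := ofContract e hvw
  continuous_toFun := by
    apply continuous_mk
    · exact continuous_pi fun u => (continuous_apply (G.contractMap hvw u)).comp continuous_pt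
    · exact continuous_pi fun e' => (continuous_apply e').comp continuous_line

/-- The inclusion `Z_e(G) → X^d(G)`, as a continuous map. -/
def coincInclCM (v w : G.V) : C(coincLocus G d v w, Picture G d) :=
  ⟨Subtype.val, continuous_subtype_val⟩

/-- The projection `π : Z_e(G) → X^d(G/e)`, as a continuous map. -/
def contractOfCoincCM (e : G.E) {v w : G.V} (hvw : v ≠ w) :
    C(coincLocus G d v w, Picture (G.contractEdge e hvw) d) where
  toFun := contractOfCoinc e hvw
  continuous_toFun := by
    apply continuous_mk
    · exact continuous_pi fun u =>
        (continuous_apply u.1).comp (continuous_pt.comp continuous_subtype_val)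
    · exact continuous_pi fun e' =>
        (continuous_apply e'.1).comp (continuous_line.comp continuous_subtype_val)

end Picture

/-- `G` is a simple graph: no loops, and distinct edges have distinct endpoint pairs. -/
def Multigraph.IsSimple (G : Multigraph) : Prop :=
  (∀ e, ¬ G.IsLoop e) ∧ Function.Injective G.ends

/-- A picture is generic if distinct vertices are assigned distinct points. -/
def Picture.IsGeneric {G : Multigraph} {d : ℕ} (P : Picture G d) : Prop :=
  Function.Injective P.pt

/-- The picture variety `PV^d(G)`: the closure in `X^d(G)` of the set of generic
pictures. -/
def PictureVariety (G : Multigraph) (d : ℕ) : Set (Picture G d) :=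
  closure {P : Picture G d | P.IsGeneric}

/-- `G` is an orchard: every edge is a loop or an isthmus. -/
def Multigraph.IsOrchard (G : Multigraph) : Prop :=
  ∀ e : G.E, G.IsLoop e ∨ G.IsIsthmus e





/-- The singular chain complex functor `TopCat ⥤ ChainComplex AddCommGrp ℕ`:
free abelian groups on the singular simplicial set, with alternating face map
differentials. -/
def singularChainComplexFunctor : TopCat ⥤ ChainComplex AddCommGrpCat ℕ :=
  TopCat.toSSet ⋙ ((SimplicialObject.whiskering _ _).obj AddCommGrpCat.free) ⋙
    AlgebraicTopology.alternatingFaceMapComplex AddCommGrpCat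

/-- The `n`-th singular homology functor with integer coefficients. -/
def singularHomologyFunctor (n : ℕ) : TopCat ⥤ AddCommGrpCat :=
  singularChainComplexFunctor ⋙ HomologicalComplex.homologyFunctor AddCommGrpCat _ n

/-- The `n`-th singular homology group `H_n(X; ℤ)` of a topological space. -/
def SH (n : ℕ) (X : Type) [TopologicalSpace X] : AddCommGrpCat :=
  (singularHomologyFunctor n).obj (TopCat.of X)

/-- The map induced on singular homology by a continuous map. -/
def SHmap (n : ℕ) {X Y : Type} [TopologicalSpace X] [TopologicalSpace Y] (f : C(X, Y)) :
    SH n X ⟶ SH n Y :=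
  (singularHomologyFunctor n).map (X := TopCat.of X) (Y := TopCat.of Y) (TopCat.ofHom f)

/-- The rank of the `n`-th integral singular homology group. -/
def shRank (n : ℕ) (X : Type) [TopologicalSpace X] : ℕ :=
  Module.finrank ℤ (SH n X)

/-- The compressed Poincaré series `Σ_i rank H_{2i}(X;ℤ) qⁱ` of a space, as a formal
power series. -/
def cPoin (X : Type) [TopologicalSpace X] : PowerSeries ℤ :=
  PowerSeries.mk fun i => (shRank (2 * i) X : ℤ)

/-- The `q`-analogue `[n]_q = 1 + q + ⋯ + q^{n-1}` as an integer polynomial. -/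
def qa (n : ℕ) : Polynomial ℤ :=
  ∑ i ∈ Finset.range n, Polynomial.X ^ i

/-- `π : X → B` is a fiber bundle with fiber `F`: every point of the base has an open
neighborhood `U` with a trivializing homeomorphism `π⁻¹(U) ≃ U × F` over `U`. -/
def IsFiberBundleWithFiber {X B F : Type*} [TopologicalSpace X] [TopologicalSpace B]
    [TopologicalSpace F] (π : X → B) : Prop :=
  ∀ b : B, ∃ U : Set B, IsOpen U ∧ b ∈ U ∧
    ∃ φ : (π ⁻¹' U) ≃ₜ U × F, ∀ x : (π ⁻¹' U), ((φ x).1 : B) = π x.1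






/-- `X` admits the structure of a complex manifold of (complex) dimension `n`:
a charted space structure modeled on `ℂⁿ` whose transition maps are analytic. -/
def IsComplexManifoldOfDim (n : ℕ) (X : Type) [TopologicalSpace X] : Prop :=
  ∃ cs : ChartedSpace (EuclideanSpace ℂ (Fin n)) X,
    @IsManifold ℂ _ (EuclideanSpace ℂ (Fin n)) _ _ (EuclideanSpace ℂ (Fin n)) _
      (modelWithCornersSelf ℂ (EuclideanSpace ℂ (Fin n))) (⊤ : WithTop ℕ∞) X _ cs

/-- `X` admits the structure of a complex manifold. -/
def IsComplexManifold (X : Type) [TopologicalSpace X] : Prop :=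
  ∃ n, IsComplexManifoldOfDim n X



/-- The `q`-analogue `[n]_q` as a rational function over `ℚ`. -/
def qaQ (n : ℕ) : RatFunc ℚ :=
  ∑ i ∈ Finset.range n, (RatFunc.X : RatFunc ℚ) ^ i

/- ===================== Auxiliary machinery for the proof ===================== -/

namespace PicPath

open Submodule

abbrev Vc (d : ℕ) := Fin (d + 1) → ℂ

variable {d : ℕ}

lemma range_pair (x y : Vc d) : Set.range ![x, y] = {x, y} := by
  ext w
  constructor
  · rintro ⟨i, rfl⟩
    fin_cases i <;> simp
  · intro hw
    rcases hw with rfl | rfl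
    exacts [⟨0, rfl⟩, ⟨1, rfl⟩]

lemma pair_indep {x y : Vc d} (h : ∀ s t : ℂ, s • x + t • y = 0 → s = 0 ∧ t = 0) :
    LinearIndependent ℂ ![x, y] := LinearIndependent.pair_iff.2 h

lemma indep_of_not_mem_span {x y : Vc d} (hx : x ≠ 0) (hy : y ∉ span ℂ ({x} : Set (Vc d))) :
    LinearIndependent ℂ ![x, y] := by
  refine pair_indep fun s t hst => ?_
  have ht : t = 0 := by
    by_contra ht
    apply hy
    rw [Submodule.mem_span_singleton]
    refine ⟨t⁻¹ * -s, ?_⟩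
    have h1 : t • y = -s • x := by
      have h' := hst
      rw [add_comm] at h'
      rw [eq_neg_of_add_eq_zero_left h', neg_smul]
    have h2 := congrArg (fun w => t⁻¹ • w) h1
    simpa [smul_smul, inv_mul_cancel₀ ht, mul_comm] using h2.symm
  refine ⟨?_, ht⟩
  rw [ht, zero_smul, add_zero] at hst
  rcases smul_eq_zero.1 hst with h | h
  · exact h
  · exact absurd h hx

lemma not_mem_span_of_indep {x y : Vc d} (h : LinearIndependent ℂ ![x, y]) :
    y ∉ span ℂ ({x} : Set (Vc d)) := by
  intro hy
  rw [Submodule.mem_span_singleton] at hy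
  obtain ⟨a, rfl⟩ := hy
  obtain ⟨hs, ht⟩ := LinearIndependent.pair_iff.1 h a (-1) (by module)
  norm_num at ht

lemma finrank_span_pair {x y : Vc d} (h : LinearIndependent ℂ ![x, y]) :
    Module.finrank ℂ (span ℂ ({x, y} : Set (Vc d))) = 2 := by
  rw [← range_pair x y]
  simpa using finrank_span_eq_card h

lemma mem_pair_left (x y : Vc d) : x ∈ span ℂ ({x, y} : Set (Vc d)) :=
  Submodule.subset_span (Set.mem_insert _ _)

lemma mem_pair_right (x y : Vc d) : y ∈ span ℂ ({x, y} : Set (Vc d)) :=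
  Submodule.subset_span (Set.mem_insert_of_mem _ rfl)

lemma span_pair_smul_left {a : ℂ} (ha : a ≠ 0) (x y : Vc d) :
    span ℂ ({a • x, y} : Set (Vc d)) = span ℂ ({x, y} : Set (Vc d)) := by
  apply le_antisymm
  · apply Submodule.span_le.2
    intro w hw
    rw [Set.mem_insert_iff, Set.mem_singleton_iff] at hw
    rcases hw with h | h
    · rw [h]; exact Submodule.smul_mem _ _ (mem_pair_left x y)
    · rw [h]; exact mem_pair_right x y
  · apply Submodule.span_le.2
    intro w hw
    rw [Set.mem_insert_iff, Set.mem_singleton_iff] at hw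
    rcases hw with h | h
    · have h2 : (a⁻¹ • (a • x)) ∈ span ℂ ({a • x, y} : Set (Vc d)) :=
        Submodule.smul_mem _ _ (mem_pair_left _ y)
      rw [smul_smul, inv_mul_cancel₀ ha, one_smul] at h2
      rw [h]; exact h2
    · rw [h]; exact mem_pair_right _ y

/-- A point of `CP d` from a nonzero vector. -/
def mkPt (x : Vc d) (hx : x ≠ 0) : CP d := Projectivization.mk ℂ x hx

/-- The quotient map onto the Grassmannian of lines. -/
def lineMkFun (d : ℕ) :
    {f : Fin 2 → (Fin (d + 1) → ℂ) // LinearIndependent ℂ f} → ProjLine d := fun p =>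
  ⟨Submodule.span ℂ (Set.range p.1), by simpa using finrank_span_eq_card p.2⟩

lemma continuous_lineMkFun (d : ℕ) : Continuous (lineMkFun d) :=
  continuous_coinduced_rng

/-- A projective line from a linearly independent pair of vectors. -/
def mkLine (x y : Vc d) (h : LinearIndependent ℂ ![x, y]) : ProjLine d :=
  lineMkFun d ⟨![x, y], h⟩

lemma mkLine_coe (x y : Vc d) (h : LinearIndependent ℂ ![x, y]) :
    (mkLine x y h).1 = span ℂ ({x, y} : Set (Vc d)) := by
  show span ℂ (Set.range ![x, y]) = _
  rw [range_pair]

lemma mkPt_congr {x y : Vc d} (hx : x ≠ 0) (hy : y ≠ 0) (h : x = y) :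
    mkPt x hx = mkPt y hy := by subst h; rfl

variable {G : Multigraph}

/-- A picture from vector data. -/
def ofVecs (p : G.V → Vc d) (q r : G.E → Vc d)
    (hp : ∀ v, p v ≠ 0) (hqr : ∀ e, LinearIndependent ℂ ![q e, r e])
    (hm : ∀ e, ∀ w ∈ G.ends e, p w ∈ span ℂ ({q e, r e} : Set (Vc d))) : Picture G d where
  pt v := mkPt (p v) (hp v)
  line e := mkLine (q e) (r e) (hqr e)
  mem e w hw := by
    show (mkPt (p w) (hp w)).submodule ≤ (mkLine (q e) (r e) (hqr e)).1
    rw [mkPt, Projectivization.submodule_mk, mkLine_coe]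
    exact (Submodule.span_singleton_le_iff_mem _ _).2 (hm e w hw)

lemma pic_ext {P Q : Picture G d} (h1 : P.pt = Q.pt) (h2 : P.line = Q.line) : P = Q := by
  obtain ⟨p1, l1, m1⟩ := P
  obtain ⟨p2, l2, m2⟩ := Q
  dsimp at h1 h2
  subst h1; subst h2; rfl

lemma ofVecs_congr {p p' : G.V → Vc d} {q r q' r' : G.E → Vc d}
    {hp hqr hm hp' hqr' hm'}
    (h1 : p = p') (h2 : q = q') (h3 : r = r') :
    ofVecs p q r hp hqr hm = ofVecs p' q' r' hp' hqr' hm' := by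
  subst h1; subst h2; subst h3; rfl

lemma ofVecs_eq {p p' : G.V → Vc d} {q r q' r' : G.E → Vc d}
    {hp hqr hm hp' hqr' hm'}
    (h1 : ∀ v, ∃ a : ℂ, a ≠ 0 ∧ a • p v = p' v)
    (h2 : ∀ e, span ℂ ({q e, r e} : Set (Vc d)) = span ℂ ({q' e, r' e} : Set (Vc d))) :
    ofVecs p q r hp hqr hm = ofVecs p' q' r' hp' hqr' hm' := by
  apply pic_ext
  · funext v
    obtain ⟨a, ha, hav⟩ := h1 v
    show Projectivization.mk ℂ (p v) _ = Projectivization.mk ℂ (p' v) _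
    rw [Projectivization.mk_eq_mk_iff]
    refine ⟨(Units.mk0 a ha)⁻¹, ?_⟩
    rw [← hav]
    simp [Units.smul_def, smul_smul, inv_mul_cancel₀ ha]
  · funext e
    refine Subtype.ext ?_
    show (mkLine (q e) (r e) (hqr e)).1 = (mkLine (q' e) (r' e) (hqr' e)).1
    rw [mkLine_coe, mkLine_coe]
    exact h2 e

lemma eq_ofVecs (P : Picture G d) (p : G.V → Vc d) (q r : G.E → Vc d)
    (hp : ∀ v, p v ≠ 0) (hqr : ∀ e, LinearIndependent ℂ ![q e, r e])
    (hm : ∀ e, ∀ w ∈ G.ends e, p w ∈ span ℂ ({q e, r e} : Set (Vc d)))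
    (h1 : ∀ v, P.pt v = mkPt (p v) (hp v))
    (h2 : ∀ e, (P.line e).1 = span ℂ ({q e, r e} : Set (Vc d))) :
    P = ofVecs p q r hp hqr hm :=
  pic_ext (funext h1) (funext fun e => Subtype.ext (by
    show (P.line e).1 = (mkLine (q e) (r e) (hqr e)).1
    rw [mkLine_coe]
    exact h2 e))

lemma continuous_mkPt {X : Type*} [TopologicalSpace X] {f : X → Vc d}
    (hf : Continuous f) (h : ∀ x, f x ≠ 0) :
    Continuous fun x => mkPt (f x) (h x) := by
  have h1 : Continuous fun x => (⟨f x, h x⟩ : {v : Vc d // v ≠ 0}) := hf.subtype_mk h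
  have h2 : Continuous (Quotient.mk'' : {v : Vc d // v ≠ 0} → ℙ ℂ (Vc d)) :=
    continuous_coinduced_rng
  exact h2.comp h1

lemma continuous_mkLine {X : Type*} [TopologicalSpace X] {f g : X → Vc d}
    (hf : Continuous f) (hg : Continuous g) (h : ∀ x, LinearIndependent ℂ ![f x, g x]) :
    Continuous fun x => mkLine (f x) (g x) (h x) := by
  have h1 : Continuous fun x =>
      (⟨![f x, g x], h x⟩ : {p : Fin 2 → Vc d // LinearIndependent ℂ p}) := by
    refine Continuous.subtype_mk ?_ _
    refine continuous_pi fun i => ?_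
    fin_cases i
    · simpa using hf
    · simpa using hg
  exact (continuous_lineMkFun d).comp h1

lemma joined_ofVecs (p : unitInterval → G.V → Vc d) (q r : unitInterval → G.E → Vc d)
    (hpc : ∀ v, Continuous fun t => p t v)
    (hqc : ∀ e, Continuous fun t => q t e)
    (hrc : ∀ e, Continuous fun t => r t e)
    (hp : ∀ t v, p t v ≠ 0) (hqr : ∀ t e, LinearIndependent ℂ ![q t e, r t e])
    (hm : ∀ t e, ∀ w ∈ G.ends e, p t w ∈ span ℂ ({q t e, r t e} : Set (Vc d))) :
    Joined (ofVecs (p 0) (q 0) (r 0) (hp 0) (hqr 0) (hm 0))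
      (ofVecs (p 1) (q 1) (r 1) (hp 1) (hqr 1) (hm 1)) := by
  refine ⟨⟨⟨fun t => ofVecs (p t) (q t) (r t) (hp t) (hqr t) (hm t), ?_⟩, rfl, rfl⟩⟩
  apply Picture.continuous_mk
  · exact continuous_pi fun v => continuous_mkPt (hpc v) (fun t => hp t v)
  · exact continuous_pi fun e => continuous_mkLine (hqc e) (hrc e) (fun t => hqr t e)

lemma exists_functional {n : ℕ} {k : Type} [Fintype k] (a : k → (Fin n → ℂ))
    (ha : ∀ i, a i ≠ 0) :
    ∃ φ : (Fin n → ℂ) →ₗ[ℂ] ℂ, ∀ i, φ (a i) ≠ 0 := by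
  classical
  set pa : k → Polynomial ℂ :=
    fun i => ∑ j : Fin n, Polynomial.C (a i j) * Polynomial.X ^ (j : ℕ) with hpa
  have hpane : ∀ i, pa i ≠ 0 := by
    intro i h0
    obtain ⟨j, hj⟩ := Function.ne_iff.1 (ha i)
    apply hj
    have hc := congrArg (fun pp => Polynomial.coeff pp (j : ℕ)) h0
    simp only [hpa, Polynomial.finset_sum_coeff, Polynomial.coeff_C_mul,
      Polynomial.coeff_X_pow, Polynomial.coeff_zero, mul_ite, mul_one, mul_zero,
      Fin.val_inj, Finset.sum_ite_eq, Finset.mem_univ, if_true] at hc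
    exact hc
  have hQ : (∏ i, pa i) ≠ 0 := Finset.prod_ne_zero_iff.2 fun i _ => hpane i
  have hfin : {x : ℂ | (∏ i, pa i).IsRoot x}.Finite := Polynomial.finite_setOf_isRoot hQ
  obtain ⟨z, hz⟩ := hfin.infinite_compl.nonempty
  rw [Set.mem_compl_iff, Set.mem_setOf_eq] at hz
  refine ⟨{ toFun := fun x => ∑ j : Fin n, x j * z ^ (j : ℕ)
            map_add' := by intro x y; simp [add_mul, Finset.sum_add_distrib]
            map_smul' := by
              intro m x
              simp [Finset.mul_sum, mul_assoc] }, ?_⟩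
  intro i
  have hev : Polynomial.eval z (pa i) ≠ 0 := by
    intro h0
    apply hz
    rw [Polynomial.IsRoot, Polynomial.eval_prod]
    exact Finset.prod_eq_zero (Finset.mem_univ i) h0
  simpa [hpa, Polynomial.eval_finset_sum] using hev

lemma joined_lines (u0 : Vc d) (hu0 : u0 ≠ 0) (c : G.E → Vc d)
    (hc : ∀ e, c e ∉ span ℂ ({u0} : Set (Vc d))) (z : Vc d)
    (hz : z ∉ span ℂ ({u0} : Set (Vc d))) :
    Joined (ofVecs (G := G) (fun _ => u0) (fun _ => u0) c (fun _ => hu0)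
        (fun e => indep_of_not_mem_span hu0 (hc e)) (fun e w _ => mem_pair_left _ _))
      (ofVecs (G := G) (fun _ => u0) (fun _ => u0) (fun _ => z) (fun _ => hu0)
        (fun _ => indep_of_not_mem_span hu0 hz) (fun e w _ => mem_pair_left _ _)) := by
  classical
  set σ : unitInterval → ℂ := fun t => ((t : ℝ) : ℂ) with hσdef
  have hσc : Continuous σ := Complex.continuous_ofReal.comp continuous_subtype_val
  have hσ0 : σ 0 = 0 := by simp [hσdef]
  have hσ1 : σ 1 = 1 := by simp [hσdef]
  set r : unitInterval → G.E → Vc d := fun t e =>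
    if z ∈ span ℂ ({u0, c e} : Set (Vc d)) then c e
    else (1 - σ t) • c e + σ t • z with hrdef
  have hind : ∀ t e, LinearIndependent ℂ ![u0, r t e] := by
    intro t e
    simp only [hrdef]
    split_ifs with hmem
    · exact indep_of_not_mem_span hu0 (hc e)
    · refine pair_indep fun s β heq => ?_
      have key : (β * σ t) • z = (-s) • u0 + (-(β * (1 - σ t))) • c e := by
        linear_combination (norm := module) heq
      have hβσ : β * σ t = 0 := by
        by_contra hne
        apply hmem
        refine Submodule.mem_span_pair.2
          ⟨(β * σ t)⁻¹ * (-s), (β * σ t)⁻¹ * (-(β * (1 - σ t))), ?_⟩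
        have h4 := congrArg (fun w => (β * σ t)⁻¹ • w) key
        simp only [smul_smul, smul_add] at h4
        rw [inv_mul_cancel₀ hne, one_smul] at h4
        exact h4.symm
      have h2 : s • u0 + (β * (1 - σ t)) • c e = 0 := by
        rw [hβσ, zero_smul] at key
        linear_combination (norm := module) key
      obtain ⟨hs, hb⟩ :=
        LinearIndependent.pair_iff.1 (indep_of_not_mem_span hu0 (hc e)) _ _ h2
      refine ⟨hs, ?_⟩
      have hβ : β = β * (1 - σ t) + β * σ t := by ring
      rw [hβ, hb, hβσ, add_zero]
  have hrc : ∀ e, Continuous fun t => r t e := by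
    intro e
    simp only [hrdef]
    split_ifs with hmem
    · exact continuous_const
    · exact ((continuous_const.sub hσc).smul continuous_const).add
        (hσc.smul continuous_const)
  have hJ : Joined
      (ofVecs (G := G) (fun _ => u0) (fun _ => u0) (r 0) (fun _ => hu0) (hind 0)
        (fun e w _ => mem_pair_left _ _))
      (ofVecs (G := G) (fun _ => u0) (fun _ => u0) (r 1) (fun _ => hu0) (hind 1)
        (fun e w _ => mem_pair_left _ _)) :=
    joined_ofVecs (fun _ _ => u0) (fun _ _ => u0) r
      (fun v => continuous_const) (fun e => continuous_const) hrc
      (fun _ _ => hu0) hind (fun t e w _ => mem_pair_left _ _)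
  have e0 : ofVecs (G := G) (fun _ => u0) (fun _ => u0) (r 0) (fun _ => hu0) (hind 0)
      (fun e w _ => mem_pair_left _ _)
      = ofVecs (G := G) (fun _ => u0) (fun _ => u0) c (fun _ => hu0)
        (fun e => indep_of_not_mem_span hu0 (hc e)) (fun e w _ => mem_pair_left _ _) := by
    refine ofVecs_congr rfl rfl ?_
    funext e
    simp only [hrdef]
    split_ifs with hmem
    · rfl
    · rw [hσ0]; simp
  have e1 : ofVecs (G := G) (fun _ => u0) (fun _ => u0) (r 1) (fun _ => hu0) (hind 1)
      (fun e w _ => mem_pair_left _ _)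
      = ofVecs (G := G) (fun _ => u0) (fun _ => u0) (fun _ => z) (fun _ => hu0)
        (fun _ => indep_of_not_mem_span hu0 hz) (fun e w _ => mem_pair_left _ _) := by
    refine ofVecs_eq (fun v => ⟨1, one_ne_zero, one_smul _ _⟩) ?_
    intro e
    simp only [hrdef]
    split_ifs with hmem
    · have hle : span ℂ ({u0, z} : Set (Vc d)) ≤ span ℂ ({u0, c e} : Set (Vc d)) := by
        apply Submodule.span_le.2
        intro w hw
        rw [Set.mem_insert_iff, Set.mem_singleton_iff] at hw
        rcases hw with h | h
        · rw [h]; exact mem_pair_left _ _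
        · rw [h]; exact hmem
      refine (Submodule.eq_of_le_of_finrank_le hle ?_).symm
      rw [finrank_span_pair (indep_of_not_mem_span hu0 (hc e)),
        finrank_span_pair (indep_of_not_mem_span hu0 hz)]
    · rw [hσ1]
      norm_num
  rw [e0, e1] at hJ
  exact hJ

end PicPath


open PicPath Submodule

/-- For every graph `G` and every integer `d ≥ 2`, the picture space
`X^d(G)` is path-connected. -/
theorem picture_space_pathConnected (G : Multigraph) (d : ℕ) (hd : 2 ≤ d) :
    PathConnectedSpace (Picture G d) := by
  classical
  -- standard basis vectors
  have h01 : (0 : Fin (d + 1)) ≠ 1 := by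
    intro h
    have h2 := congrArg Fin.val h
    rw [Fin.val_zero, Fin.val_one'] at h2
    have h3 : 1 % (d + 1) = 1 := Nat.mod_eq_of_lt (by omega)
    omega
  set E0 : Vc d := Pi.single 0 1 with hE0def
  set E1 : Vc d := Pi.single 1 1 with hE1def
  have hE0 : E0 ≠ 0 := by
    intro h
    have h2 := congrFun h 0
    rw [hE0def] at h2
    simp [Pi.single_eq_same] at h2
  have hE1mem : E1 ∉ span ℂ ({E0} : Set (Vc d)) := by
    intro hmem
    rw [Submodule.mem_span_singleton] at hmem
    obtain ⟨μ, hμ⟩ := hmem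
    have h2 := congrFun hμ 1
    rw [hE0def, hE1def] at h2
    simp [Pi.single_eq_same, Pi.single_eq_of_ne h01.symm] at h2
  set B : Picture G d := ofVecs (G := G) (fun _ => E0) (fun _ => E0) (fun _ => E1)
    (fun _ => hE0) (fun _ => indep_of_not_mem_span hE0 hE1mem)
    (fun e w _ => mem_pair_left _ _) with hBdef
  suffices hJB : ∀ P : Picture G d, Joined P B by
    exact ⟨⟨B⟩, fun x y => (hJB x).trans (hJB y).symm⟩
  intro P
  -- vertex vectors
  set a : G.V → Vc d := fun v => (P.pt v).rep with hadef
  have ha : ∀ v, a v ≠ 0 := fun v => Projectivization.rep_nonzero _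
  have haP : ∀ v, P.pt v = mkPt (a v) (ha v) := fun v => (Projectivization.mk_rep _).symm
  have haline : ∀ e, ∀ w ∈ G.ends e, a w ∈ (P.line e).1 := by
    intro e w hw
    have h := P.mem e w hw
    have h2 : a w ∈ (P.pt w).submodule := by
      rw [haP w]
      show a w ∈ (Projectivization.mk ℂ (a w) (ha w)).submodule
      rw [Projectivization.submodule_mk]
      exact Submodule.mem_span_singleton_self _
    exact h h2
  -- edge data
  set ve : G.E → G.V := fun e => (G.ends e).out.1 with hvedef
  have hve : ∀ e, ve e ∈ G.ends e := fun e => Sym2.out_fst_mem _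
  set b : G.E → Vc d := fun e => a (ve e) with hbdef
  have hbmem : ∀ e, b e ∈ (P.line e).1 := fun e => haline e (ve e) (hve e)
  have hbne : ∀ e, b e ≠ 0 := fun e => ha _
  have hfr : ∀ e, Module.finrank ℂ (P.line e).1 = 2 := fun e => (P.line e).2
  have hlt : ∀ e, span ℂ ({b e} : Set (Vc d)) < (P.line e).1 := by
    intro e
    refine lt_of_le_of_ne ((Submodule.span_singleton_le_iff_mem _ _).2 (hbmem e)) ?_
    intro hEq
    have h1 := finrank_span_singleton (K := ℂ) (hbne e)
    rw [hEq, hfr e] at h1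
    norm_num at h1
  have hc0 : ∀ e, ∃ x ∈ (P.line e).1, x ∉ span ℂ ({b e} : Set (Vc d)) :=
    fun e => SetLike.exists_of_lt (hlt e)
  choose c hcmem hcnot using hc0
  -- the functional
  obtain ⟨φ, hφ⟩ := exists_functional a ha
  have hφb : ∀ e, φ (b e) ≠ 0 := fun e => hφ (ve e)
  have v0 : G.V := Classical.arbitrary G.V
  set u : Vc d := (φ (a v0))⁻¹ • a v0 with hudef
  have hφu : φ u = 1 := by
    rw [hudef, map_smul, smul_eq_mul, inv_mul_cancel₀ (hφ v0)]
  have hu : u ≠ 0 := by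
    intro h
    rw [h, map_zero] at hφu
    exact one_ne_zero hφu.symm
  set c' : G.E → Vc d := fun e => c e - (φ (c e) / φ (b e)) • b e with hc'def
  have hφc' : ∀ e, φ (c' e) = 0 := by
    intro e
    simp only [hc'def]
    rw [map_sub, map_smul, smul_eq_mul, div_mul_cancel₀ _ (hφb e), sub_self]
  have hc'ne : ∀ e, c' e ≠ 0 := by
    intro e h
    apply hcnot e
    rw [Submodule.mem_span_singleton]
    simp only [hc'def] at h
    exact ⟨φ (c e) / φ (b e), (sub_eq_zero.1 h).symm⟩
  have hc'mem : ∀ e, c' e ∈ (P.line e).1 := fun e =>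
    Submodule.sub_mem _ (hcmem e) (Submodule.smul_mem _ _ (hbmem e))
  have hbc' : ∀ e, LinearIndependent ℂ ![b e, c' e] := by
    intro e
    refine pair_indep fun s t hst => ?_
    have h1 := congrArg φ hst
    rw [map_add, map_smul, map_smul, map_zero, hφc', smul_eq_mul, smul_eq_mul,
      mul_zero, add_zero] at h1
    have hs : s = 0 := by
      rcases mul_eq_zero.1 h1 with h | h
      exacts [h, absurd h (hφb e)]
    refine ⟨hs, ?_⟩
    rw [hs, zero_smul, zero_add] at hst
    rcases smul_eq_zero.1 hst with h | h
    exacts [h, absurd h (hc'ne e)]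
  have hspan : ∀ e, span ℂ ({b e, c' e} : Set (Vc d)) = (P.line e).1 := by
    intro e
    refine Submodule.eq_of_le_of_finrank_le ?_ ?_
    · refine Submodule.span_le.2 ?_
      intro w hw
      rw [Set.mem_insert_iff, Set.mem_singleton_iff] at hw
      rcases hw with h | h
      · rw [h]; exact hbmem e
      · rw [h]; exact hc'mem e
    · rw [hfr e, finrank_span_pair (hbc' e)]
  -- a vector outside span {u, E0}
  have hzc0 : ∃ zc : Vc d, zc ∉ span ℂ ({u, E0} : Set (Vc d)) := by
    have hlt2 : span ℂ ({u, E0} : Set (Vc d)) < ⊤ := by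
      apply span_lt_top_of_card_lt_finrank
      have hcard : ({u, E0} : Set (Vc d)).toFinset.card ≤ 2 := by
        rw [Set.toFinset_insert, Set.toFinset_singleton]
        exact (Finset.card_insert_le _ _).trans (by simp)
      have hfr2 : Module.finrank ℂ (Vc d) = d + 1 := Module.finrank_fin_fun ℂ
      omega
    obtain ⟨x, _, hx⟩ := SetLike.exists_of_lt hlt2
    exact ⟨x, hx⟩
  obtain ⟨zc, hzc⟩ := hzc0
  have hzcu : zc ∉ span ℂ ({u} : Set (Vc d)) := fun h =>
    hzc (Submodule.span_mono (Set.singleton_subset_iff.2 (Set.mem_insert _ _)) h)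
  have hzcE0 : zc ∉ span ℂ ({E0} : Set (Vc d)) := by
    intro h
    refine hzc (Submodule.span_mono ?_ h)
    intro x hx
    rw [Set.mem_singleton_iff] at hx
    rw [hx]
    exact Set.mem_insert_of_mem _ (Set.mem_singleton _)
  -- the time parameter
  set σ : unitInterval → ℂ := fun t => ((t : ℝ) : ℂ) with hσdef
  have hσc : Continuous σ := Complex.continuous_ofReal.comp continuous_subtype_val
  have hσ0 : σ 0 = 0 := by simp [hσdef]
  have hσ1 : σ 1 = 1 := by simp [hσdef]
  -- Stage 1: collapse the picture onto the point [u]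
  set p1 : unitInterval → G.V → Vc d :=
    fun t v => (1 - σ t) • a v + (σ t * φ (a v)) • u with hp1def
  set q1 : unitInterval → G.E → Vc d :=
    fun t e => (1 - σ t) • b e + (σ t * φ (b e)) • u with hq1def
  have hp1 : ∀ t v, p1 t v ≠ 0 := by
    intro t v h
    have h1 := congrArg φ h
    simp only [hp1def, map_add, map_smul, smul_eq_mul, map_zero, hφu, mul_one] at h1
    have h2 : φ (a v) = 0 := by linear_combination h1
    exact hφ v h2
  have hq1i : ∀ t e, LinearIndependent ℂ ![q1 t e, c' e] := by
    intro t e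
    refine pair_indep fun s β hst => ?_
    have h1 := congrArg φ hst
    simp only [hq1def, map_add, map_smul, smul_eq_mul, map_zero, hφu, mul_one,
      hφc', mul_zero, add_zero] at h1
    have hs : s = 0 := by
      have h2 : s * φ (b e) = 0 := by linear_combination h1
      rcases mul_eq_zero.1 h2 with h | h
      exacts [h, absurd h (hφb e)]
    refine ⟨hs, ?_⟩
    rw [hs, zero_smul, zero_add] at hst
    rcases smul_eq_zero.1 hst with h | h
    exacts [h, absurd h (hc'ne e)]
  have hm1 : ∀ t e, ∀ w ∈ G.ends e, p1 t w ∈ span ℂ ({q1 t e, c' e} : Set (Vc d)) := by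
    intro t e w hw
    have hw' : a w ∈ span ℂ ({b e, c' e} : Set (Vc d)) := by
      rw [hspan e]; exact haline e w hw
    obtain ⟨m, n, hmn⟩ := Submodule.mem_span_pair.1 hw'
    refine Submodule.mem_span_pair.2 ⟨m, n * (1 - σ t), ?_⟩
    have hφaw : φ (a w) = m * φ (b e) := by
      rw [← hmn, map_add, map_smul, map_smul, hφc', smul_eq_mul, smul_eq_mul,
        mul_zero, add_zero]
    simp only [hp1def, hq1def]
    rw [hφaw, ← hmn]
    module
  have hJ1 : Joined
      (ofVecs (G := G) (p1 0) (q1 0) c' (hp1 0) (hq1i 0) (hm1 0))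
      (ofVecs (G := G) (p1 1) (q1 1) c' (hp1 1) (hq1i 1) (hm1 1)) :=
    joined_ofVecs p1 q1 (fun _ => c')
      (fun v => by
        simp only [hp1def]
        exact ((continuous_const.sub hσc).smul continuous_const).add
          ((hσc.mul continuous_const).smul continuous_const))
      (fun e => by
        simp only [hq1def]
        exact ((continuous_const.sub hσc).smul continuous_const).add
          ((hσc.mul continuous_const).smul continuous_const))
      (fun e => continuous_const)
      hp1 hq1i hm1
  -- identify the left endpoint with P
  have indepuc' : ∀ e, LinearIndependent ℂ ![u, c' e] := by
    intro e
    refine pair_indep fun s t hst => ?_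
    have h1 := congrArg φ hst
    simp only [map_add, map_smul, map_zero, smul_eq_mul, hφu, hφc', mul_one, mul_zero,
      add_zero] at h1
    refine ⟨h1, ?_⟩
    rw [h1, zero_smul, zero_add] at hst
    rcases smul_eq_zero.1 hst with h | h
    exacts [h, absurd h (hc'ne e)]
  set X2 : Picture G d := ofVecs (G := G) (fun _ => u) (fun _ => u) c'
    (fun _ => hu) indepuc' (fun e w _ => mem_pair_left _ _) with hX2def
  have e1 : P = ofVecs (G := G) (p1 0) (q1 0) c' (hp1 0) (hq1i 0) (hm1 0) := by
    refine eq_ofVecs P (p1 0) (q1 0) c' (hp1 0) (hq1i 0) (hm1 0) ?_ ?_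
    · intro v
      refine (haP v).trans (mkPt_congr (ha v) (hp1 0 v) ?_)
      simp [hp1def, hσ0]
    · intro e
      rw [show q1 0 e = b e by simp [hq1def, hσ0]]
      exact (hspan e).symm
  have e2 : ofVecs (G := G) (p1 1) (q1 1) c' (hp1 1) (hq1i 1) (hm1 1) = X2 := by
    rw [hX2def]
    refine ofVecs_eq ?_ ?_
    · intro v
      refine ⟨(φ (a v))⁻¹, inv_ne_zero (hφ v), ?_⟩
      simp only [hp1def, hσ1]
      rw [sub_self, zero_smul, zero_add, one_mul, smul_smul,
        inv_mul_cancel₀ (hφ v), one_smul]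
    · intro e
      rw [show q1 1 e = φ (b e) • u by
        simp only [hq1def, hσ1]
        rw [sub_self, zero_smul, zero_add, one_mul]]
      exact span_pair_smul_left (hφb e) _ _
  -- Stage 2: equalize lines at [u]
  set X3 : Picture G d := ofVecs (G := G) (fun _ => u) (fun _ => u) (fun _ => zc)
    (fun _ => hu) (fun _ => indep_of_not_mem_span hu hzcu)
    (fun e w _ => mem_pair_left _ _) with hX3def
  have hJ2 : Joined X2 X3 := by
    rw [hX2def, hX3def]
    exact joined_lines u hu c' (fun e => not_mem_span_of_indep (indepuc' e)) zc hzcu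
  -- Stage 3: move the point from [u] to [E0]
  set X4 : Picture G d := ofVecs (G := G) (fun _ => E0) (fun _ => E0) (fun _ => zc)
    (fun _ => hE0) (fun _ => indep_of_not_mem_span hE0 hzcE0)
    (fun e w _ => mem_pair_left _ _) with hX4def
  have hJ3 : Joined X3 X4 := by
    by_cases hcase : u ∈ span ℂ ({E0} : Set (Vc d))
    · obtain ⟨lam, hlam⟩ := Submodule.mem_span_singleton.1 hcase
      have hlamne : lam ≠ 0 := by
        rintro rfl
        rw [zero_smul] at hlam
        exact hu hlam.symm
      have e3 : X3 = X4 := by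
        rw [hX3def, hX4def]
        refine ofVecs_eq ?_ ?_
        · intro v
          exact ⟨lam⁻¹, inv_ne_zero hlamne,
            by rw [← hlam, smul_smul, inv_mul_cancel₀ hlamne, one_smul]⟩
        · intro e
          rw [← hlam, span_pair_smul_left hlamne]
      rw [e3]
    · set w3 : unitInterval → Vc d := fun t => (1 - σ t) • u + σ t • E0 with hw3def
      have hw3ne : ∀ t, w3 t ≠ 0 := by
        intro t h
        simp only [hw3def] at h
        by_cases h1 : (1 : ℂ) - σ t = 0
        · have hσt : σ t = 1 := by linear_combination -h1
          rw [h1, zero_smul, zero_add, hσt, one_smul] at h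
          exact hE0 h
        · apply hcase
          rw [Submodule.mem_span_singleton]
          refine ⟨(1 - σ t)⁻¹ * (-σ t), ?_⟩
          have h2 : (1 - σ t) • u = (-σ t) • E0 := by
            linear_combination (norm := module) h
          have h3 := congrArg (fun y => (1 - σ t)⁻¹ • y) h2
          simp only [smul_smul] at h3
          rw [inv_mul_cancel₀ h1, one_smul] at h3
          exact h3.symm
      have hind3 : ∀ t, LinearIndependent ℂ ![w3 t, zc] := by
        intro t
        refine pair_indep fun s β h => ?_
        have hβ : β = 0 := by
          by_contra hβ
          apply hzc
          refine Submodule.mem_span_pair.2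
            ⟨β⁻¹ * (-(s * (1 - σ t))), β⁻¹ * (-(s * σ t)), ?_⟩
          have key : β • zc = (-(s * (1 - σ t))) • u + (-(s * σ t)) • E0 := by
            simp only [hw3def] at h
            linear_combination (norm := module) h
          have h4 := congrArg (fun y => β⁻¹ • y) key
          simp only [smul_smul, smul_add] at h4
          rw [inv_mul_cancel₀ hβ, one_smul] at h4
          exact h4.symm
        refine ⟨?_, hβ⟩
        rw [hβ, zero_smul, add_zero] at h
        rcases smul_eq_zero.1 h with h | h
        exacts [h, absurd h (hw3ne t)]
      have hJ3' : Joined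
          (ofVecs (G := G) (fun _ => w3 0) (fun _ => w3 0) (fun _ => zc)
            (fun _ => hw3ne 0) (fun _ => hind3 0) (fun e w _ => mem_pair_left _ _))
          (ofVecs (G := G) (fun _ => w3 1) (fun _ => w3 1) (fun _ => zc)
            (fun _ => hw3ne 1) (fun _ => hind3 1) (fun e w _ => mem_pair_left _ _)) :=
        joined_ofVecs (fun t _ => w3 t) (fun t _ => w3 t) (fun _ _ => zc)
          (fun v => by
            simp only [hw3def]
            exact ((continuous_const.sub hσc).smul continuous_const).add
              (hσc.smul continuous_const))
          (fun e => by
            simp only [hw3def]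
            exact ((continuous_const.sub hσc).smul continuous_const).add
              (hσc.smul continuous_const))
          (fun e => continuous_const)
          (fun t v => hw3ne t) (fun t e => hind3 t) (fun t e w _ => mem_pair_left _ _)
      have e30 : ofVecs (G := G) (fun _ => w3 0) (fun _ => w3 0) (fun _ => zc)
          (fun _ => hw3ne 0) (fun _ => hind3 0) (fun e w _ => mem_pair_left _ _) = X3 := by
        rw [hX3def]
        refine ofVecs_congr ?_ ?_ rfl <;>
          · funext x
            simp [hw3def, hσ0]
      have e31 : ofVecs (G := G) (fun _ => w3 1) (fun _ => w3 1) (fun _ => zc)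
          (fun _ => hw3ne 1) (fun _ => hind3 1) (fun e w _ => mem_pair_left _ _) = X4 := by
        rw [hX4def]
        refine ofVecs_congr ?_ ?_ rfl <;>
          · funext x
            simp [hw3def, hσ1]
      rw [e30, e31] at hJ3'
      exact hJ3'
  -- Stage 4: equalize lines at [E0]
  have hJ4 : Joined X4 B := by
    rw [hX4def, hBdef]
    exact joined_lines E0 hE0 (fun _ => zc) (fun _ => hzcE0) E1 hE1mem
  -- assemble
  have jA : Joined P X2 := by
    rw [e1, ← e2]
    exact hJ1
  exact ((jA.trans hJ2).trans hJ3).trans hJ4
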